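/- Let (A, Δ) be a regular multiplier Hopf algebra and let a₁, a₂, ..., aₙ be finitely many elements of A. Then there exist elements e, f ∈ A such that e·aᵢ = aᵢ and aᵢ·f = aᵢ for all i = 1, ..., n (existence of one-sided local units). -/
import Mathlib


/-! # A framework for (regular) multiplier Hopf algebras, following
Drabant–Van Daele–Zhang, "Actions of Multiplier Hopf Algebras".

Algebras are (possibly non-unital) associative algebras over `ℂ` with
non-degenerate product.  A multiplier of such an algebra (whose multiplication
is recorded as a bilinear map `mul`) is a pair `(L, R)` of linear maps with
`L (x*y) = L x * y`, `R (x*y) = x * R y` and `x * L y = R x * y`; this is the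
standard description of the multiplier algebra `M(A)`.

A regular multiplier Hopf algebra is recorded by the comultiplication
`Δ : A → M(A ⊗ A)` together with the four canonical maps
`T1 a b = Δ(a)(1 ⊗ b)`, `T2 a b = (a ⊗ 1)Δ(b)`, `T3 a b = Δ(a)(b ⊗ 1)`,
`T4 a b = (1 ⊗ a)Δ(b)` (all with values in `A ⊗ A`), which are required to be
bijective as maps of `A ⊗ A`; together with the counit and the (bijective)
antipode satisfying the usual axioms, expressed in covered (Sweedler) form. -/

open scoped TensorProduct
open TensorProduct LinearMap

noncomputable section

/-! ## Multipliers -/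

section MulPair

variable {X : Type*} [AddCommGroup X] [Module ℂ X]

/-- A multiplier of the (possibly non-unital) algebra `(X, mul)`. -/
@[ext]
structure MulPair (mul : X →ₗ[ℂ] X →ₗ[ℂ] X) : Type _ where
  L : X →ₗ[ℂ] X
  R : X →ₗ[ℂ] X
  L_mul : ∀ x y : X, L (mul x y) = mul (L x) y
  R_mul : ∀ x y : X, R (mul x y) = mul x (R y)
  middle : ∀ x y : X, mul x (L y) = mul (R x) y

namespace MulPair

variable {mul : X →ₗ[ℂ] X →ₗ[ℂ] X}

instance : One (MulPair mul) :=
  ⟨⟨LinearMap.id, LinearMap.id, fun _ _ => rfl, fun _ _ => rfl, fun _ _ => rfl⟩⟩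

@[simp] theorem one_L : (1 : MulPair mul).L = LinearMap.id := rfl
@[simp] theorem one_R : (1 : MulPair mul).R = LinearMap.id := rfl

instance : Mul (MulPair mul) :=
  ⟨fun m n =>
    ⟨m.L ∘ₗ n.L, n.R ∘ₗ m.R,
      fun x y => by simp [n.L_mul, m.L_mul],
      fun x y => by simp [m.R_mul, n.R_mul],
      fun x y => by simp [m.middle, n.middle]⟩⟩

@[simp] theorem mul_L (m n : MulPair mul) : (m * n).L = m.L ∘ₗ n.L := rfl
@[simp] theorem mul_R (m n : MulPair mul) : (m * n).R = n.R ∘ₗ m.R := rfl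

instance : Zero (MulPair mul) :=
  ⟨⟨0, 0, fun x y => by simp, fun x y => by simp, fun x y => by simp⟩⟩

@[simp] theorem zero_L : (0 : MulPair mul).L = 0 := rfl
@[simp] theorem zero_R : (0 : MulPair mul).R = 0 := rfl

instance : Add (MulPair mul) :=
  ⟨fun m n =>
    ⟨m.L + n.L, m.R + n.R,
      fun x y => by simp [m.L_mul, n.L_mul],
      fun x y => by simp [m.R_mul, n.R_mul],
      fun x y => by simp [m.middle, n.middle]⟩⟩

@[simp] theorem add_L (m n : MulPair mul) : (m + n).L = m.L + n.L := rfl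
@[simp] theorem add_R (m n : MulPair mul) : (m + n).R = m.R + n.R := rfl

instance : Neg (MulPair mul) :=
  ⟨fun m =>
    ⟨-m.L, -m.R,
      fun x y => by simp [m.L_mul],
      fun x y => by simp [m.R_mul],
      fun x y => by simp [m.middle]⟩⟩

@[simp] theorem neg_L (m : MulPair mul) : (-m).L = -m.L := rfl
@[simp] theorem neg_R (m : MulPair mul) : (-m).R = -m.R := rfl

instance : Sub (MulPair mul) :=
  ⟨fun m n =>
    ⟨m.L - n.L, m.R - n.R,
      fun x y => by simp [m.L_mul, n.L_mul, sub_eq_add_neg],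
      fun x y => by simp [m.R_mul, n.R_mul, sub_eq_add_neg],
      fun x y => by simp [m.middle, n.middle, sub_eq_add_neg]⟩⟩

@[simp] theorem sub_L (m n : MulPair mul) : (m - n).L = m.L - n.L := rfl
@[simp] theorem sub_R (m n : MulPair mul) : (m - n).R = m.R - n.R := rfl

instance : SMul ℂ (MulPair mul) :=
  ⟨fun c m =>
    ⟨c • m.L, c • m.R,
      fun x y => by simp [m.L_mul],
      fun x y => by simp [m.R_mul],
      fun x y => by simp [m.middle]⟩⟩

@[simp] theorem smul_L (c : ℂ) (m : MulPair mul) : (c • m).L = c • m.L := rfl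
@[simp] theorem smul_R (c : ℂ) (m : MulPair mul) : (c • m).R = c • m.R := rfl

instance : SMul ℕ (MulPair mul) :=
  ⟨fun n m =>
    ⟨n • m.L, n • m.R,
      fun x y => by simp [m.L_mul],
      fun x y => by simp [m.R_mul],
      fun x y => by simp [m.middle]⟩⟩

@[simp] theorem nsmul_L (n : ℕ) (m : MulPair mul) : (n • m).L = n • m.L := rfl
@[simp] theorem nsmul_R (n : ℕ) (m : MulPair mul) : (n • m).R = n • m.R := rfl

instance : SMul ℤ (MulPair mul) :=
  ⟨fun n m =>
    ⟨n • m.L, n • m.R,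
      fun x y => by simp [m.L_mul],
      fun x y => by simp [m.R_mul],
      fun x y => by simp [m.middle]⟩⟩

@[simp] theorem zsmul_L (n : ℤ) (m : MulPair mul) : (n • m).L = n • m.L := rfl
@[simp] theorem zsmul_R (n : ℤ) (m : MulPair mul) : (n • m).R = n • m.R := rfl

/-- The underlying pair of linear maps. -/
def toProd (m : MulPair mul) : (X →ₗ[ℂ] X) × (X →ₗ[ℂ] X) := (m.L, m.R)

theorem toProd_injective : Function.Injective (toProd (mul := mul)) := by
  intro m n h
  have h1 : m.L = n.L := congrArg Prod.fst h
  have h2 : m.R = n.R := congrArg Prod.snd h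
  exact MulPair.ext h1 h2

instance : AddCommGroup (MulPair mul) :=
  toProd_injective.addCommGroup toProd rfl (fun _ _ => rfl) (fun _ => rfl)
    (fun _ _ => rfl) (fun _ _ => rfl) (fun _ _ => rfl)

/-- `toProd` as an additive monoid homomorphism. -/
def toProdHom : MulPair mul →+ (X →ₗ[ℂ] X) × (X →ₗ[ℂ] X) :=
  { toFun := toProd, map_zero' := rfl, map_add' := fun _ _ => rfl }

instance : Module ℂ (MulPair mul) :=
  Function.Injective.module ℂ (toProdHom (mul := mul)) toProd_injective fun _ _ => rfl

theorem mul_add (m n k : MulPair mul) : m * (n + k) = m * n + m * k := by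
  ext x <;> simp

theorem add_mul (m n k : MulPair mul) : (m + n) * k = m * k + n * k := by
  ext x <;> simp

theorem smul_mul (c : ℂ) (m n : MulPair mul) : (c • m) * n = c • (m * n) := by
  ext x <;> simp

theorem mul_smul (c : ℂ) (m n : MulPair mul) : m * (c • n) = c • (m * n) := by
  ext x <;> simp

theorem mul_assoc (m n k : MulPair mul) : m * n * k = m * (n * k) := by
  ext x <;> simp [LinearMap.comp_assoc]

end MulPair

end MulPair

/-! ## Slice maps -/

section Slices

variable {X Y : Type*} [AddCommGroup X] [Module ℂ X] [AddCommGroup Y] [Module ℂ Y]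

/-- Apply a functional to the second tensor leg: `(ι ⊗ φ)`. -/
def sliceR (φ : X →ₗ[ℂ] ℂ) : Y ⊗[ℂ] X →ₗ[ℂ] Y :=
  (TensorProduct.rid ℂ Y).toLinearMap ∘ₗ LinearMap.lTensor Y φ

/-- Apply a functional to the first tensor leg: `(φ ⊗ ι)`. -/
def sliceL (φ : X →ₗ[ℂ] ℂ) : X ⊗[ℂ] Y →ₗ[ℂ] Y :=
  (TensorProduct.lid ℂ Y).toLinearMap ∘ₗ LinearMap.rTensor Y φ

@[simp] theorem sliceR_tmul (φ : X →ₗ[ℂ] ℂ) (y : Y) (x : X) :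
    sliceR φ (y ⊗ₜ[ℂ] x) = φ x • y := by simp [sliceR]

@[simp] theorem sliceL_tmul (φ : X →ₗ[ℂ] ℂ) (x : X) (y : Y) :
    sliceL φ (x ⊗ₜ[ℂ] y) = φ x • y := by simp [sliceL]

end Slices

/-! ## Regular multiplier Hopf algebras -/

section RegMultHopf

variable (A : Type*) [NonUnitalRing A] [Module ℂ A] [SMulCommClass ℂ A A]
  [IsScalarTower ℂ A A]

/-- The componentwise multiplication of `A ⊗ A`, as a bilinear map. -/
def tmulMul : (A ⊗[ℂ] A) →ₗ[ℂ] (A ⊗[ℂ] A) →ₗ[ℂ] (A ⊗[ℂ] A) :=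
  TensorProduct.curry
    ((TensorProduct.map (LinearMap.mul' ℂ A) (LinearMap.mul' ℂ A)) ∘ₗ
      (TensorProduct.tensorTensorTensorComm ℂ A A A A).toLinearMap)

@[simp] theorem tmulMul_tmul (x y x' y' : A) :
    tmulMul A (x ⊗ₜ[ℂ] y) (x' ⊗ₜ[ℂ] y') = (x * x') ⊗ₜ[ℂ] (y * y') := by
  simp [tmulMul]

variable {A}

/-- A regular multiplier Hopf algebra structure on the non-unital algebra `A`
(Van Daele; see Section 2 of the paper).  The product of `A` is required to be
non-degenerate; `Δ` is the comultiplication with values in the multiplier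
algebra `M(A ⊗ A)`; `T1 a b = Δ(a)(1 ⊗ b)`, `T2 a b = (a ⊗ 1)Δ(b)`,
`T3 a b = Δ(a)(b ⊗ 1)` and `T4 a b = (1 ⊗ a)Δ(b)` are the canonical maps with
values in `A ⊗ A`, and the four lifted maps on `A ⊗ A` are bijective (the last
two bijectivity conditions express regularity).  `counit` and the bijective
antipode `S` satisfy the usual axioms in covered form. -/
structure RegMultHopf : Type _ where
  nondegL : ∀ a : A, (∀ b : A, a * b = 0) → a = 0
  nondegR : ∀ a : A, (∀ b : A, b * a = 0) → a = 0
  Δ : A → MulPair (tmulMul A)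
  Δ_add : ∀ a b : A, Δ (a + b) = Δ a + Δ b
  Δ_smul : ∀ (c : ℂ) (a : A), Δ (c • a) = c • Δ a
  Δ_mul : ∀ a b : A, Δ (a * b) = Δ a * Δ b
  T1 : A →ₗ[ℂ] A →ₗ[ℂ] A ⊗[ℂ] A
  T2 : A →ₗ[ℂ] A →ₗ[ℂ] A ⊗[ℂ] A
  T3 : A →ₗ[ℂ] A →ₗ[ℂ] A ⊗[ℂ] A
  T4 : A →ₗ[ℂ] A →ₗ[ℂ] A ⊗[ℂ] A
  T1_spec : ∀ (a b : A) (u : A ⊗[ℂ] A),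
    tmulMul A (T1 a b) u = (Δ a).L (LinearMap.lTensor A (LinearMap.mulLeft ℂ b) u)
  T2_spec : ∀ (a b : A) (u : A ⊗[ℂ] A),
    tmulMul A u (T2 a b) = (Δ b).R (LinearMap.rTensor A (LinearMap.mulRight ℂ a) u)
  T3_spec : ∀ (a b : A) (u : A ⊗[ℂ] A),
    tmulMul A (T3 a b) u = (Δ a).L (LinearMap.rTensor A (LinearMap.mulLeft ℂ b) u)
  T4_spec : ∀ (a b : A) (u : A ⊗[ℂ] A),
    tmulMul A u (T4 a b) = (Δ b).R (LinearMap.lTensor A (LinearMap.mulRight ℂ a) u)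
  T1_bij : Function.Bijective (TensorProduct.lift T1)
  T2_bij : Function.Bijective (TensorProduct.lift T2)
  T3_bij : Function.Bijective (TensorProduct.lift T3)
  T4_bij : Function.Bijective (TensorProduct.lift T4)
  coassoc : ∀ a b c : A,
    (TensorProduct.assoc ℂ A A A) (LinearMap.rTensor A (T2 a) (T1 b c)) =
      LinearMap.lTensor A (T1.flip c) (T2 a b)
  counit : A →ₗ[ℂ] ℂ
  counit_mul : ∀ a b : A, counit (a * b) = counit a * counit b
  counit_T1 : ∀ a b : A, sliceL counit (T1 a b) = a * b
  counit_T2 : ∀ a b : A, sliceR counit (T2 a b) = a * b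
  S : A →ₗ[ℂ] A
  Sinv : A →ₗ[ℂ] A
  S_Sinv : ∀ a : A, S (Sinv a) = a
  Sinv_S : ∀ a : A, Sinv (S a) = a
  S_mul : ∀ a b : A, S (a * b) = S b * S a
  S_T1 : ∀ a b : A,
    LinearMap.mul' ℂ A (LinearMap.rTensor A S (T1 a b)) = counit a • b
  S_T2 : ∀ a b : A,
    LinearMap.mul' ℂ A (LinearMap.lTensor A S (T2 a b)) = counit b • a

/-- `φ` is a left integral on `(A, Δ)`: a non-zero functional with
`(ι ⊗ φ)Δ(a) = φ(a)1` in `M(A)`; evaluated against elements of `A` this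
reads `(ι ⊗ φ)(Δ(a)(b ⊗ 1)) = φ(a)b` and `(ι ⊗ φ)((b ⊗ 1)Δ(a)) = φ(a)b`. -/
def IsLeftIntegral (H : RegMultHopf (A := A)) (φ : A →ₗ[ℂ] ℂ) : Prop :=
  φ ≠ 0 ∧ (∀ a b : A, sliceR φ (H.T3 a b) = φ a • b) ∧
    ∀ a b : A, sliceR φ (H.T2 b a) = φ a • b

end RegMultHopf

/-! ## Module algebras and smash products -/

section ModAlg

variable {A : Type*} [NonUnitalRing A] [Module ℂ A] [SMulCommClass ℂ A A]
  [IsScalarTower ℂ A A]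
variable {R : Type*} [AddCommGroup R] [Module ℂ R]

/-- The bilinear map `(p, q) ↦ (p ▷ x) ⬝ (q ▷ z)` used to express the module
algebra condition `a ▷ (x ⬝ y) = Σ (a₍₁₎ ▷ x) ⬝ (a₍₂₎ ▷ y)` in covered form. -/
def actPair (mulR : R →ₗ[ℂ] R →ₗ[ℂ] R) (act : A →ₗ[ℂ] R →ₗ[ℂ] R) (x z : R) :
    A →ₗ[ℂ] A →ₗ[ℂ] R :=
  LinearMap.mk₂ ℂ (fun p q => mulR (act p x) (act q z))
    (fun p p' q => by simp)
    (fun c p q => by simp)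
    (fun p q q' => by simp)
    (fun c p q => by simp)

/-- `R`, an algebra with multiplication `mulR` (associative, with
non-degenerate product), is a left `A`-module algebra for the unital action
`act`; the compatibility `a(xy) = Σ (a₍₁₎x)(a₍₂₎y)` is expressed in the
covered form `a ▷ (x ⬝ (b ▷ z)) = Σ (a₍₁₎ ▷ x) ⬝ ((a₍₂₎ b) ▷ z)` using
`T1 a b = Δ(a)(1 ⊗ b)`. -/
structure IsModAlg (H : RegMultHopf (A := A)) (mulR : R →ₗ[ℂ] R →ₗ[ℂ] R)
    (act : A →ₗ[ℂ] R →ₗ[ℂ] R) : Prop where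
  mul_assoc' : ∀ x y z : R, mulR (mulR x y) z = mulR x (mulR y z)
  mul_nondegL : ∀ x : R, (∀ y : R, mulR x y = 0) → x = 0
  mul_nondegR : ∀ x : R, (∀ y : R, mulR y x = 0) → x = 0
  act_act : ∀ (a b : A) (x : R), act (a * b) x = act a (act b x)
  unital : Submodule.span ℂ {y : R | ∃ a x, act a x = y} = ⊤
  compat : ∀ (a b : A) (x z : R),
    act a (mulR x (act b z)) =
      TensorProduct.lift (actPair mulR act x z) (H.T1 a b)

/-- The bilinear map `(p, q) ↦ (x ⬝ (p ▷ x')) ⊗ q` describing the smash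
product multiplication in covered form. -/
def smashPair (mulR : R →ₗ[ℂ] R →ₗ[ℂ] R) (act : A →ₗ[ℂ] R →ₗ[ℂ] R) (x x' : R) :
    A →ₗ[ℂ] A →ₗ[ℂ] R ⊗[ℂ] A :=
  LinearMap.mk₂ ℂ (fun p q => mulR x (act p x') ⊗ₜ[ℂ] q)
    (fun p p' q => by simp [add_tmul])
    (fun c p q => by simp [smul_tmul'])
    (fun p q q' => by simp [tmul_add])
    (fun c p q => by simp [tmul_smul])

/-- The bilinear map `(p, q) ↦ p ▷ (f (q ▷ z))`, used to express in covered
form the extension of an action to the multiplier algebra `M(R)`: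
`(a ▷ m)x = Σ a₍₁₎ ▷ (m (S(a₍₂₎) ▷ x))`. -/
def actSandwich (act : A →ₗ[ℂ] R →ₗ[ℂ] R) (f : R →ₗ[ℂ] R) (z : R) :
    A →ₗ[ℂ] A →ₗ[ℂ] R :=
  LinearMap.mk₂ ℂ (fun p q => act p (f (act q z)))
    (fun p p' q => by simp)
    (fun c p q => by simp)
    (fun p q q' => by simp)
    (fun c p q => by simp)

/-- The bilinear map `(p, q) ↦ (x ⬝ γ(p)) ⊗ q` for a map `γ` into the
multiplier algebra `M(R)`. -/
def multTensorPair {mulR : R →ₗ[ℂ] R →ₗ[ℂ] R} (γ : A →ₗ[ℂ] MulPair mulR) (x : R) :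
    A →ₗ[ℂ] A →ₗ[ℂ] R ⊗[ℂ] A :=
  LinearMap.mk₂ ℂ (fun p q => ((γ p).R x) ⊗ₜ[ℂ] q)
    (fun p p' q => by simp [add_tmul])
    (fun c p q => by simp [smul_tmul'])
    (fun p q q' => by simp [tmul_add])
    (fun c p q => by simp [tmul_smul])

/-- `μ` is the multiplication of the smash product `R # A`:
`(x # a)(x' # a') = Σ x(a₍₁₎ ▷ x') # a₍₂₎a'`, expressed via
`T1 a a' = Δ(a)(1 ⊗ a') = Σ a₍₁₎ ⊗ a₍₂₎a'`. -/
def IsSmashMul (H : RegMultHopf (A := A)) (mulR : R →ₗ[ℂ] R →ₗ[ℂ] R)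
    (act : A →ₗ[ℂ] R →ₗ[ℂ] R)
    (μ : (R ⊗[ℂ] A) →ₗ[ℂ] (R ⊗[ℂ] A) →ₗ[ℂ] (R ⊗[ℂ] A)) : Prop :=
  ∀ (x x' : R) (a a' : A),
    μ (x ⊗ₜ[ℂ] a) (x' ⊗ₜ[ℂ] a') =
      TensorProduct.lift (smashPair mulR act x x') (H.T1 a a')

end ModAlg

/-! ## Dual pairs of regular multiplier Hopf algebras -/

section Pairing

variable {A B : Type*} [NonUnitalRing A] [Module ℂ A] [SMulCommClass ℂ A A]
  [IsScalarTower ℂ A A] [NonUnitalRing B] [Module ℂ B] [SMulCommClass ℂ B B]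
  [IsScalarTower ℂ B B]

/-- A (non-degenerate) pairing of regular multiplier Hopf algebras in the
sense of Drabant–Van Daele.  `β` is the bilinear form; `lA a b = a ▷ b =
Σ ⟨a, b₍₂₎⟩ b₍₁₎`, `lB b a = b ▷ a = Σ ⟨a₍₂₎, b⟩ a₍₁₎`, `rA a b = a ◁ b =
Σ ⟨a₍₁₎, b⟩ a₍₂₎`, `rB b a = b ◁ a = Σ ⟨a, b₍₁₎⟩ b₍₂₎` are the Sweedler leg
actions, tied to the comultiplications via the `..._leg` axioms and dual to
the multiplications via the `dual...` axioms; all four actions are unital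
module actions. -/
structure MHAPairing (HA : RegMultHopf (A := A)) (HB : RegMultHopf (A := B)) :
    Type _ where
  β : A →ₗ[ℂ] B →ₗ[ℂ] ℂ
  nondegA : ∀ a : A, (∀ b : B, β a b = 0) → a = 0
  nondegB : ∀ b : B, (∀ a : A, β a b = 0) → b = 0
  lA : A →ₗ[ℂ] B →ₗ[ℂ] B
  lB : B →ₗ[ℂ] A →ₗ[ℂ] A
  rA : A →ₗ[ℂ] B →ₗ[ℂ] A
  rB : B →ₗ[ℂ] A →ₗ[ℂ] B
  lA_leg : ∀ (a : A) (b c : B), sliceR (β a) (HB.T3 b c) = lA a b * c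
  rB_leg : ∀ (a : A) (b c : B), sliceL (β a) (HB.T4 c b) = c * rB b a
  lB_leg : ∀ (b : B) (a c : A), sliceR (β.flip b) (HA.T3 a c) = lB b a * c
  rA_leg : ∀ (b : B) (a c : A), sliceL (β.flip b) (HA.T4 c a) = c * rA a b
  dual1 : ∀ (a : A) (b b' : B), β a (b * b') = β (rA a b) b'
  dual2 : ∀ (a : A) (b b' : B), β a (b' * b) = β (lB b a) b'
  dual3 : ∀ (a a' : A) (b : B), β (a * a') b = β a' (rB b a)
  dual4 : ∀ (a a' : A) (b : B), β (a' * a) b = β a' (lA a b)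
  lA_act : ∀ (a a' : A) (b : B), lA (a * a') b = lA a (lA a' b)
  lB_act : ∀ (b b' : B) (a : A), lB (b * b') a = lB b (lB b' a)
  rA_act : ∀ (a : A) (b b' : B), rA a (b * b') = rA (rA a b) b'
  rB_act : ∀ (b : B) (a a' : A), rB b (a * a') = rB (rB b a) a'
  lA_unital : Submodule.span ℂ {y : B | ∃ a b, lA a b = y} = ⊤
  lB_unital : Submodule.span ℂ {y : A | ∃ b a, lB b a = y} = ⊤
  rA_unital : Submodule.span ℂ {y : A | ∃ a b, rA a b = y} = ⊤
  rB_unital : Submodule.span ℂ {y : B | ∃ b a, rB b a = y} = ⊤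

end Pairing

/-! ## The dual action -/

section DualAction

variable {A B : Type*} [NonUnitalRing A] [Module ℂ A] [SMulCommClass ℂ A A]
  [IsScalarTower ℂ A A] [NonUnitalRing B] [Module ℂ B] [SMulCommClass ℂ B B]
  [IsScalarTower ℂ B B]
variable {R : Type*} [AddCommGroup R] [Module ℂ R]
variable {HA : RegMultHopf (A := A)} {HB : RegMultHopf (A := B)}

/-- The dual action of `B` on the smash product `R # A`:
`b · (x # a) = x # (b ▷ a) = Σ ⟨a₍₂₎, b⟩ x # a₍₁₎`. -/
def dualAct (P : MHAPairing HA HB) : B →ₗ[ℂ] (R ⊗[ℂ] A) →ₗ[ℂ] R ⊗[ℂ] A :=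
  (LinearMap.lTensorHom R) ∘ₗ P.lB

@[simp] theorem dualAct_tmul (P : MHAPairing HA HB) (b : B) (x : R) (a : A) :
    dualAct P b (x ⊗ₜ[ℂ] a) = x ⊗ₜ[ℂ] P.lB b a := rfl

end DualAction

end
/-! ## STATEMENT 0 -/

noncomputable section

/-! ### Auxiliary material for the proof of Proposition 2.2 -/

section LocalUnitsAux

set_option maxHeartbeats 1000000

open Module

variable {A : Type*} [NonUnitalRing A] [Module ℂ A] [SMulCommClass ℂ A A]
  [IsScalarTower ℂ A A]

private lemma sliceL_lTensor_aux (f : Module.Dual ℂ A) (g : A →ₗ[ℂ] A) (z : A ⊗[ℂ] A) :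
    sliceL f (LinearMap.lTensor A g z) = g (sliceL f z) := by
  induction z using TensorProduct.induction_on with
  | zero => simp
  | tmul x y => simp
  | add x y hx hy => simp [hx, hy]

private lemma sliceR_lTensor_aux (f : Module.Dual ℂ A) (g : A →ₗ[ℂ] A) (z : A ⊗[ℂ] A) :
    sliceR f (LinearMap.lTensor A g z) = sliceR (f ∘ₗ g) z := by
  induction z using TensorProduct.induction_on with
  | zero => simp
  | tmul x y => simp
  | add x y hx hy => simp [hx, hy]

private lemma sliceR_comm_aux (f : Module.Dual ℂ A) (z : A ⊗[ℂ] A) :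
    sliceR f z = sliceL f (TensorProduct.comm ℂ A A z) := by
  induction z using TensorProduct.induction_on with
  | zero => simp
  | tmul x y => simp
  | add x y hx hy => simp [hx, hy]

/-- Every element of `A ⊗ A` can be written with basis elements as first legs. -/
private lemma basis_decomp (z : A ⊗[ℂ] A) :
    ∃ F : Module.Free.ChooseBasisIndex ℂ A →₀ A,
      z = ∑ i ∈ F.support, (Module.Free.chooseBasis ℂ A) i ⊗ₜ[ℂ] F i := by
  classical
  set b := Module.Free.chooseBasis ℂ A with hb
  let E : (A ⊗[ℂ] A) ≃ₗ[ℂ] (Module.Free.ChooseBasisIndex ℂ A →₀ A) :=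
    (TensorProduct.congr b.repr (LinearEquiv.refl ℂ A)).trans
      (TensorProduct.finsuppScalarLeft ℂ A _)
  have hEsymm : ∀ (i : Module.Free.ChooseBasisIndex ℂ A) (t : A),
      E.symm (Finsupp.single i t) = b i ⊗ₜ[ℂ] t := by
    intro i t
    simp only [E, LinearEquiv.trans_symm, LinearEquiv.trans_apply,
      TensorProduct.finsuppScalarLeft_symm_apply_single, TensorProduct.congr_symm_tmul,
      Basis.repr_symm_single_one, LinearEquiv.refl_symm, LinearEquiv.refl_apply]
  refine ⟨E z, ?_⟩
  conv_lhs => rw [← E.symm_apply_apply z]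
  generalize E z = F
  conv_lhs => rw [← Finsupp.sum_single F]
  rw [Finsupp.sum, map_sum]
  exact Finset.sum_congr rfl fun i _ => hEsymm i (F i)

/-- Functionals applied to the first leg separate points of `A ⊗ A`. -/
private lemma sliceL_sep {z : A ⊗[ℂ] A}
    (h : ∀ f : Module.Dual ℂ A, sliceL f z = 0) : z = 0 := by
  classical
  obtain ⟨F, hz⟩ := basis_decomp z
  set b := Module.Free.chooseBasis ℂ A with hb
  have hF : ∀ i₀ ∈ F.support, F i₀ = 0 := by
    intro i₀ hi₀
    have h0 := h (b.coord i₀)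
    rw [hz, map_sum] at h0
    have hterm : ∀ i ∈ F.support,
        sliceL (b.coord i₀) (b i ⊗ₜ[ℂ] F i) = if i = i₀ then F i else 0 := by
      intro i _
      rw [sliceL_tmul, Basis.coord_apply, Basis.repr_self, Finsupp.single_apply]
      split <;> simp
    rw [Finset.sum_congr rfl hterm, Finset.sum_ite_eq' F.support i₀ F] at h0
    simpa [hi₀] using h0
  rw [hz]
  refine Finset.sum_eq_zero fun i hi => ?_
  rw [hF i hi, TensorProduct.tmul_zero]

private lemma sliceR_sep {z : A ⊗[ℂ] A}
    (h : ∀ f : Module.Dual ℂ A, sliceR f z = 0) : z = 0 := by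
  have h' : ∀ f : Module.Dual ℂ A, sliceL f (TensorProduct.comm ℂ A A z) = 0 := by
    intro f; rw [← sliceR_comm_aux]; exact h f
  have := sliceL_sep h'
  have h2 := congrArg (TensorProduct.comm ℂ A A).symm this
  simpa using h2

private lemma tmulMul_lTensor_mulRight (x : A) (z w : A ⊗[ℂ] A) :
    tmulMul A (LinearMap.lTensor A (LinearMap.mulRight ℂ x) z) w
      = tmulMul A z (LinearMap.lTensor A (LinearMap.mulLeft ℂ x) w) := by
  induction z using TensorProduct.induction_on with
  | zero => simp
  | add u v hu hv => simp only [map_add, LinearMap.add_apply, hu, hv]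
  | tmul p q =>
    induction w using TensorProduct.induction_on with
    | zero => simp
    | add u v hu hv => simp only [map_add, hu, hv]
    | tmul r s => simp [mul_assoc]

private lemma tmulMul_tmul_eq (c a : A) (w : A ⊗[ℂ] A) :
    tmulMul A (c ⊗ₜ[ℂ] a) w
      = LinearMap.rTensor A (LinearMap.mulLeft ℂ c)
          (LinearMap.lTensor A (LinearMap.mulLeft ℂ a) w) := by
  induction w using TensorProduct.induction_on with
  | zero => simp
  | add u v hu hv => simp only [map_add, hu, hv]
  | tmul r s => simp

private lemma sliceR_tmulMul (f : Module.Dual ℂ A) (z : A ⊗[ℂ] A) (x y : A) :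
    sliceR f (tmulMul A z (x ⊗ₜ[ℂ] y))
      = (sliceR (f ∘ₗ LinearMap.mulRight ℂ y) z) * x := by
  induction z using TensorProduct.induction_on with
  | zero => simp
  | add u v hu hv => simp only [map_add, LinearMap.add_apply, hu, hv, add_mul]
  | tmul p q => simp [smul_mul_assoc]

/-- Right non-degeneracy of the product of `A ⊗ A`. -/
private lemma tmulMul_right_nondeg (H : RegMultHopf (A := A)) {z : A ⊗[ℂ] A}
    (h : ∀ w : A ⊗[ℂ] A, tmulMul A z w = 0) : z = 0 := by
  have step1 : ∀ y : A, LinearMap.lTensor A (LinearMap.mulRight ℂ y) z = 0 := by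
    intro y
    apply sliceR_sep
    intro f
    rw [sliceR_lTensor_aux]
    have hx : ∀ x : A, (sliceR (f ∘ₗ LinearMap.mulRight ℂ y) z) * x = 0 := by
      intro x
      rw [← sliceR_tmulMul f z x y, h (x ⊗ₜ[ℂ] y), map_zero]
    exact H.nondegL _ hx
  apply sliceL_sep
  intro g
  apply H.nondegL
  intro y
  have := congrArg (sliceL g) (step1 y)
  rw [sliceL_lTensor_aux, map_zero] at this
  simpa using this

private lemma tmulMul_ext (H : RegMultHopf (A := A)) {z z' : A ⊗[ℂ] A}
    (h : ∀ w : A ⊗[ℂ] A, tmulMul A z w = tmulMul A z' w) : z = z' := by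
  have h0 : ∀ w : A ⊗[ℂ] A, tmulMul A (z - z') w = 0 := by
    intro w
    rw [map_sub, LinearMap.sub_apply, h w, sub_self]
  have := tmulMul_right_nondeg H h0
  exact sub_eq_zero.mp this

/-- `(ε ⊗ ι) ∘ T1 = mul`. -/
private lemma counit_lift_T1 (H : RegMultHopf (A := A)) (v : A ⊗[ℂ] A) :
    sliceL H.counit (TensorProduct.lift H.T1 v) = LinearMap.mul' ℂ A v := by
  induction v using TensorProduct.induction_on with
  | zero => simp
  | add u w hu hw => simp only [map_add, hu, hw]
  | tmul p q => rw [TensorProduct.lift.tmul, H.counit_T1, LinearMap.mul'_apply]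

/-- `T1 ((y p) ⊗ q) = Δ(y) · T1 (p ⊗ q)`. -/
private lemma lift_T1_rTensor (H : RegMultHopf (A := A)) (y : A) (v : A ⊗[ℂ] A) :
    TensorProduct.lift H.T1 (LinearMap.rTensor A (LinearMap.mulLeft ℂ y) v)
      = (H.Δ y).L (TensorProduct.lift H.T1 v) := by
  induction v using TensorProduct.induction_on with
  | zero => simp
  | add u w hu hw => simp only [map_add, hu, hw]
  | tmul p q =>
    rw [LinearMap.rTensor_tmul, TensorProduct.lift.tmul, TensorProduct.lift.tmul,
      LinearMap.mulLeft_apply]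
    refine tmulMul_ext H fun w => ?_
    rw [H.T1_spec, H.Δ_mul, MulPair.mul_L, LinearMap.comp_apply, ← H.T1_spec,
      ← (H.Δ y).L_mul]

/-- `T1 (p ⊗ (q x)) = T1 (p ⊗ q) · (1 ⊗ x)`. -/
private lemma lift_T1_lTensor (H : RegMultHopf (A := A)) (x : A) (v : A ⊗[ℂ] A) :
    TensorProduct.lift H.T1 (LinearMap.lTensor A (LinearMap.mulRight ℂ x) v)
      = LinearMap.lTensor A (LinearMap.mulRight ℂ x) (TensorProduct.lift H.T1 v) := by
  induction v using TensorProduct.induction_on with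
  | zero => simp
  | add u w hu hw => simp only [map_add, hu, hw]
  | tmul p q =>
    rw [LinearMap.lTensor_tmul, TensorProduct.lift.tmul, TensorProduct.lift.tmul,
      LinearMap.mulRight_apply]
    refine tmulMul_ext H fun w => ?_
    rw [H.T1_spec, tmulMul_lTensor_mulRight, H.T1_spec,
      ← LinearMap.lTensor_comp_apply, ← LinearMap.mulLeft_mul]

/-- `Δ(y)(c ⊗ a) = (Δ(y)(c ⊗ 1)) · (1 ⊗ a)`. -/
private lemma DeltaL_tmul (H : RegMultHopf (A := A)) (y c a : A) :
    (H.Δ y).L (c ⊗ₜ[ℂ] a)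
      = LinearMap.lTensor A (LinearMap.mulRight ℂ a) (H.T3 y c) := by
  refine tmulMul_ext H fun w => ?_
  rw [← (H.Δ y).L_mul, tmulMul_tmul_eq, ← H.T3_spec, tmulMul_lTensor_mulRight, H.T3_spec]

/-- The finite-dimensional duality core: if all functional slices of all
`(y ⊗ 1) · z` (first-leg left multiples) lie in a left-stable submodule `J`,
then `mul z ∈ J`. -/
private lemma mul'_mem_of_slices (H : RegMultHopf (A := A)) (z : A ⊗[ℂ] A)
    (J : Submodule ℂ A) (hJ : ∀ (x w : A), w ∈ J → x * w ∈ J)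
    (h : ∀ (y : A) (f : Module.Dual ℂ A),
      sliceL f (LinearMap.rTensor A (LinearMap.mulLeft ℂ y) z) ∈ J) :
    LinearMap.mul' ℂ A z ∈ J := by
  classical
  obtain ⟨F, hz⟩ := basis_decomp z
  set b := Module.Free.chooseBasis ℂ A with hb
  -- the hypothesis, rewritten through the decomposition
  have hy : ∀ (y : A) (f : Module.Dual ℂ A),
      (∑ i ∈ F.support, f (y * b i) • F i) ∈ J := by
    intro y f
    have h2 := h y f
    rw [hz, map_sum, map_sum] at h2
    simpa using h2
  -- the span of the coefficient vectors is everything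
  set κ := {i // i ∈ F.support}
  set Φ : Set (κ → ℂ) :=
    Set.range (fun p : A × Module.Dual ℂ A => fun i : κ => p.2 (p.1 * b i)) with hΦ
  have hspan : Submodule.span ℂ Φ = ⊤ := by
    by_contra hne
    obtain ⟨v₀, hv₀⟩ : ∃ v₀ : κ → ℂ, v₀ ∉ Submodule.span ℂ Φ := by
      by_contra h'
      push_neg at h'
      exact hne (Submodule.eq_top_iff'.mpr h')
    have hq : (Submodule.span ℂ Φ).mkQ v₀ ≠ 0 := by
      simpa [Submodule.Quotient.mk_eq_zero] using hv₀
    have hnall : ¬ ∀ φ : Module.Dual ℂ ((κ → ℂ) ⧸ Submodule.span ℂ Φ),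
        φ ((Submodule.span ℂ Φ).mkQ v₀) = 0 := fun hall =>
      hq ((Module.forall_dual_apply_eq_zero_iff ℂ _).mp hall)
    obtain ⟨φ, hφ⟩ := not_forall.mp hnall
    set g : Module.Dual ℂ (κ → ℂ) := φ ∘ₗ (Submodule.span ℂ Φ).mkQ with hg
    have hgΦ : ∀ v ∈ Φ, g v = 0 := by
      intro v hv
      have : (Submodule.span ℂ Φ).mkQ v = 0 := by
        rw [Submodule.mkQ_apply, Submodule.Quotient.mk_eq_zero]
        exact Submodule.subset_span hv
      rw [hg, LinearMap.comp_apply, this, map_zero]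
    set d : κ → ℂ := fun i => g fun j => if i = j then 1 else 0 with hd
    set σ : A := ∑ i : κ, d i • b i.1 with hσ
    have hσ0 : σ = 0 := by
      apply H.nondegR
      intro y
      rw [← Module.forall_dual_apply_eq_zero_iff ℂ (y * σ)]
      intro f
      have hmem : (fun i : κ => f (y * b i)) ∈ Φ := ⟨(y, f), rfl⟩
      have h0 := hgΦ _ hmem
      rw [LinearMap.pi_apply_eq_sum_univ g fun i : κ => f (y * b i)] at h0
      rw [hσ, Finset.mul_sum]
      simp only [mul_smul_comm]
      rw [map_sum, ← h0]
      refine Finset.sum_congr rfl fun i _ => ?_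
      rw [map_smul, smul_eq_mul, smul_eq_mul, mul_comm]
    have hdz : ∀ i : κ, d i = 0 := by
      intro i₀
      have hrepr := congrArg (fun t => (b.repr t) i₀.1) hσ0
      simp only [hσ, map_sum, map_smul, Basis.repr_self, map_zero] at hrepr
      rw [Finsupp.coe_zero, Pi.zero_apply] at hrepr
      rw [Finsupp.coe_finset_sum, Finset.sum_apply] at hrepr
      have hterm : ∀ i ∈ (Finset.univ : Finset κ),
          (d i • Finsupp.single i.1 (1 : ℂ)) i₀.1 = if i = i₀ then d i else 0 := by
        intro i _
        rw [Finsupp.smul_apply, Finsupp.single_apply]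
        by_cases hii : i = i₀
        · subst hii; simp
        · have hne' : ¬ (i.1 = i₀.1) := fun hc => hii (Subtype.ext hc)
          simp [hne', hii]
      rw [Finset.sum_congr rfl hterm, Finset.sum_ite_eq' Finset.univ i₀ d] at hrepr
      simpa using hrepr
    apply hφ
    have hgv : g v₀ = 0 := by
      rw [LinearMap.pi_apply_eq_sum_univ g v₀]
      refine Finset.sum_eq_zero fun i _ => ?_
      have h' : (g fun j => if i = j then 1 else 0) = 0 := by simpa [hd] using hdz i
      rw [h', smul_zero]
    exact hgv
  -- each leg `F i` belongs to `J`
  have hall : ∀ v : κ → ℂ, (∑ i : κ, v i • F i.1) ∈ J := by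
    intro v
    have hvmem : v ∈ Submodule.span ℂ Φ := hspan ▸ Submodule.mem_top
    induction hvmem using Submodule.span_induction with
    | mem w hw =>
      obtain ⟨⟨y, f⟩, rfl⟩ := hw
      have := hy y f
      rwa [← Finset.sum_coe_sort F.support fun i => f (y * b i) • F i] at this
    | zero => simp
    | add u w hu hw ihu ihw =>
      have : (∑ i : κ, (u + w) i • F i.1)
          = (∑ i : κ, u i • F i.1) + (∑ i : κ, w i • F i.1) := by
        rw [← Finset.sum_add_distrib]
        exact Finset.sum_congr rfl fun i _ => by rw [Pi.add_apply, add_smul]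
      rw [this]; exact J.add_mem ihu ihw
    | smul c w hw ihw =>
      have : (∑ i : κ, (c • w) i • F i.1) = c • ∑ i : κ, w i • F i.1 := by
        rw [Finset.smul_sum]
        exact Finset.sum_congr rfl fun i _ => by
          rw [Pi.smul_apply, smul_eq_mul, ← smul_smul]
      rw [this]; exact J.smul_mem c ihw
  have hFJ : ∀ i₀ : κ, F i₀.1 ∈ J := by
    intro i₀
    have := hall fun i => if i = i₀ then (1 : ℂ) else 0
    have heq : (∑ i : κ, (if i = i₀ then (1 : ℂ) else 0) • F i.1) = F i₀.1 := by
      rw [Finset.sum_congr rfl fun i (_ : i ∈ Finset.univ) => by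
        rw [ite_smul, one_smul, zero_smul]]
      rw [Finset.sum_ite_eq' Finset.univ i₀ fun i => F i.1]
      simp
    rwa [heq] at this
  rw [hz, map_sum]
  refine Submodule.sum_mem J fun i hi => ?_
  rw [LinearMap.mul'_apply]
  exact hJ (b i) (F i) (hFJ ⟨i, hi⟩)

/-- Existence of a left local unit for a single element. -/
private lemma exists_left_unit (H : RegMultHopf (A := A))
    (hc : ∃ c : A, H.counit c = 1) (a : A) : ∃ e : A, e * a = a := by
  obtain ⟨c, hc⟩ := hc
  obtain ⟨u, hu⟩ := H.T1_bij.surjective (c ⊗ₜ[ℂ] a)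
  set J : Submodule ℂ A := LinearMap.range (LinearMap.mulRight ℂ a) with hJdef
  have hJ : ∀ (x w : A), w ∈ J → x * w ∈ J := by
    rintro x w ⟨g, rfl⟩
    exact ⟨x * g, by rw [LinearMap.mulRight_apply, LinearMap.mulRight_apply, mul_assoc]⟩
  have hmem : LinearMap.mul' ℂ A u ∈ J := by
    refine mul'_mem_of_slices H u J hJ fun y f => ?_
    obtain ⟨w, hw⟩ := H.T1_bij.surjective (H.T3 y c)
    have key : LinearMap.rTensor A (LinearMap.mulLeft ℂ y) u
        = LinearMap.lTensor A (LinearMap.mulRight ℂ a) w := by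
      apply H.T1_bij.injective
      rw [lift_T1_rTensor, hu, DeltaL_tmul, lift_T1_lTensor, hw]
    rw [key, sliceL_lTensor_aux]
    exact ⟨sliceL f w, rfl⟩
  have ha : LinearMap.mul' ℂ A u = a := by
    rw [← counit_lift_T1 H u, hu, sliceL_tmul, hc, one_smul]
  rw [ha] at hmem
  obtain ⟨e, he⟩ := hmem
  exact ⟨e, by rwa [LinearMap.mulRight_apply] at he⟩

private lemma Sinv_mul (H : RegMultHopf (A := A)) (x y : A) :
    H.Sinv (x * y) = H.Sinv y * H.Sinv x := by
  have h : x * y = H.S (H.Sinv y * H.Sinv x) := by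
    rw [H.S_mul, H.S_Sinv, H.S_Sinv]
  rw [h, H.Sinv_S]

/-- Existence of a right local unit for a single element. -/
private lemma exists_right_unit (H : RegMultHopf (A := A))
    (hc : ∃ c : A, H.counit c = 1) (a : A) : ∃ f : A, a * f = a := by
  obtain ⟨e, he⟩ := exists_left_unit H hc (H.S a)
  refine ⟨H.Sinv e, ?_⟩
  have h2 := congrArg H.Sinv he
  rwa [Sinv_mul H, H.Sinv_S] at h2

/-- Tominaga's trick: common left local units for finite families. -/
private lemma multi_left (hs : ∀ x : A, ∃ e : A, e * x = x) :
    ∀ {n : ℕ} (a : Fin n → A), ∃ e : A, ∀ i, e * a i = a i := by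
  intro n
  induction n with
  | zero => exact fun a => ⟨0, fun i => i.elim0⟩
  | succ n ih =>
    intro a
    obtain ⟨e, he⟩ := ih fun i => a i.castSucc
    obtain ⟨e', he'⟩ := hs (a (Fin.last n) - e * a (Fin.last n))
    refine ⟨e + e' - e' * e, fun i => ?_⟩
    have hx : ∀ x : A, (e + e' - e' * e) * x = e * x + (e' * x - e' * (e * x)) := by
      intro x
      rw [sub_mul, add_mul, mul_assoc]
      abel
    induction i using Fin.lastCases with
    | last =>
      rw [hx, ← mul_sub, he']
      abel
    | cast j =>
      rw [hx, he j, ← mul_sub, sub_self, mul_zero, add_zero]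

private lemma multi_right (hs : ∀ x : A, ∃ f : A, x * f = x) :
    ∀ {n : ℕ} (a : Fin n → A), ∃ f : A, ∀ i, a i * f = a i := by
  intro n
  induction n with
  | zero => exact fun a => ⟨0, fun i => i.elim0⟩
  | succ n ih =>
    intro a
    obtain ⟨f, hf⟩ := ih fun i => a i.castSucc
    obtain ⟨f', hf'⟩ := hs (a (Fin.last n) - a (Fin.last n) * f)
    refine ⟨f + f' - f * f', fun i => ?_⟩
    have hx : ∀ x : A, x * (f + f' - f * f') = x * f + (x * f' - (x * f) * f') := by
      intro x
      rw [mul_sub, mul_add, mul_assoc]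
      abel
    induction i using Fin.lastCases with
    | last =>
      rw [hx, ← sub_mul, hf']
      abel
    | cast j =>
      rw [hx, hf j, ← sub_mul, sub_self, zero_mul, add_zero]

end LocalUnitsAux

/-- **Proposition 2.2.** Let `(A, Δ)` be a regular multiplier Hopf algebra and
`a₁, …, aₙ` finitely many elements of `A`.  Then there exist `e, f ∈ A` with
`e * aᵢ = aᵢ` and `aᵢ * f = aᵢ` for all `i` (one-sided local units). -/
theorem exists_one_sided_local_units
    {A : Type*} [NonUnitalRing A] [Module ℂ A] [SMulCommClass ℂ A A]
    [IsScalarTower ℂ A A] (H : RegMultHopf (A := A))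
    {n : ℕ} (a : Fin n → A) :
    ∃ e f : A, ∀ i, e * a i = a i ∧ a i * f = a i := by
  by_cases hc : ∃ c : A, H.counit c = 1
  · obtain ⟨e, he⟩ := multi_left (exists_left_unit H hc) a
    obtain ⟨f, hf⟩ := multi_right (exists_right_unit H hc) a
    exact ⟨e, f, fun i => ⟨he i, hf i⟩⟩
  · -- degenerate case: the counit vanishes, forcing `A = 0`
    have hε : ∀ c : A, H.counit c = 0 := by
      intro c
      by_contra h0
      exact hc ⟨(H.counit c)⁻¹ • c, by rw [map_smul, smul_eq_mul, inv_mul_cancel₀ h0]⟩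
    have hεz : H.counit = 0 := by ext c; exact hε c
    have hz : ∀ x : A, x = 0 := by
      intro x
      apply H.nondegL
      intro b
      rw [← H.counit_T1 x b, hεz]
      simp [sliceL]
    exact ⟨0, 0, fun i => by rw [hz (a i)]; simp⟩

end
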